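/- Define C = 2π² ∑_{n,m ∈ ℤ} (1+n²+m²)² |φ^{nm}|², the energy-plus-enstrophy functional. Then C is a Casimir of the CHM Poisson operator with c = 0: for each fixed index i = (i₁,i₂), the sum ∑_{j ∈ ℤ²} C^{ij} φ^{i+j} ∂C/∂φ^{j} = 0, because in the sum each term at index j cancels the term at index j' = -i-j. -/
import Mathlib


open Real

/-- `1 + i₁² + i₂²` for a double index `i ∈ ℤ²`. -/
noncomputable def chmDenom (i : ℤ × ℤ) : ℝ := 1 + (i.1 : ℝ) ^ 2 + (i.2 : ℝ) ^ 2

/-- The structure constants `C^{ij}` of the CHM Poisson operator. -/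
noncomputable def chmC (i j : ℤ × ℤ) : ℂ :=
  (((i.1 * j.2 - i.2 * j.1 : ℤ) : ℂ) *
      ((1 + ((i.1 + j.1 : ℤ) : ℂ) ^ 2 + ((i.2 + j.2 : ℤ) : ℂ) ^ 2))) /
    (4 * π ^ 2 * chmDenom i * chmDenom j)

lemma chmDenom_pos (i : ℤ × ℤ) : 0 < chmDenom i := by
  have h1 : (0:ℝ) ≤ (i.1 : ℝ) ^ 2 := sq_nonneg _
  have h2 : (0:ℝ) ≤ (i.2 : ℝ) ^ 2 := sq_nonneg _
  unfold chmDenom; linarith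

lemma chmDenom_ne (i : ℤ × ℤ) : (chmDenom i : ℂ) ≠ 0 := by
  exact_mod_cast (chmDenom_pos i).ne'

/-- The energy-plus-enstrophy functional
`C = 2π² ∑ (1+n²+m²)² |φ^{nm}|²`, with gradient
`∂C/∂φ^j = 4π² (1+j₁²+j₂²)² φ^{-j}`, is a Casimir of the CHM Poisson operator
with `c = 0`: for each fixed `i`, `∑_j C^{ij} φ^{i+j} ∂C/∂φ^j = 0`. -/
theorem statement_15 (φ : ℤ × ℤ → ℂ)
    (hsupp : (Function.support φ).Finite)
    (hreal : ∀ j : ℤ × ℤ, φ (-j) = starRingEnd ℂ (φ j))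
    (i : ℤ × ℤ) :
    ∑ᶠ j : ℤ × ℤ,
      chmC i j * φ (i + j) *
        (4 * (π : ℂ) ^ 2 * ((chmDenom j : ℂ)) ^ 2 * φ (-j)) = 0 := by
  set f : ℤ × ℤ → ℂ := fun j =>
    chmC i j * φ (i + j) * (4 * (π : ℂ) ^ 2 * ((chmDenom j : ℂ)) ^ 2 * φ (-j)) with hf
  have hπ : (π : ℂ) ≠ 0 := by exact_mod_cast Real.pi_ne_zero
  have key : ∀ j : ℤ × ℤ, f (-i - j) = -f j := by
    intro j
    have h1 : i + (-i - j) = -j := by ring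
    have h2 : -(-i - j) = i + j := by ring
    simp only [hf, h1, h2]
    have hd : chmDenom (-i - j) = chmDenom (i + j) := by
      obtain ⟨a, b⟩ := i; obtain ⟨c, d⟩ := j
      simp only [chmDenom, Prod.fst_add, Prod.snd_add, Prod.fst_neg, Prod.snd_neg,
        Prod.fst_sub, Prod.snd_sub]
      push_cast
      ring
    rw [hd]
    have hscal : chmC i (-i - j) * ((chmDenom (i + j) : ℂ)) ^ 2 =
        -(chmC i j * ((chmDenom j : ℂ)) ^ 2) := by
      have hdi := chmDenom_ne i
      have hdj := chmDenom_ne j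
      have hdij := chmDenom_ne (i + j)
      have hdnij : (chmDenom (-i - j) : ℂ) = (chmDenom (i + j) : ℂ) := by
        exact_mod_cast congrArg (fun x : ℝ => (x : ℂ)) hd
      obtain ⟨a, b⟩ := i; obtain ⟨c, d⟩ := j
      simp only [chmC, chmDenom, Prod.fst_add, Prod.snd_add, Prod.fst_neg, Prod.snd_neg,
        Prod.fst_sub, Prod.snd_sub] at *
      push_cast at *
      have hA : 4 * (π:ℂ) ^ 2 * (1 + (a:ℂ) ^ 2 + (b:ℂ) ^ 2) *
          (1 + (-(a:ℂ) - c) ^ 2 + (-(b:ℂ) - d) ^ 2) ≠ 0 := by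
        rw [hdnij]
        refine mul_ne_zero (mul_ne_zero (mul_ne_zero ?_ (pow_ne_zero 2 hπ)) hdi) hdij
        norm_num
      have hB : 4 * (π:ℂ) ^ 2 * (1 + (a:ℂ) ^ 2 + (b:ℂ) ^ 2) *
          (1 + (c:ℂ) ^ 2 + (d:ℂ) ^ 2) ≠ 0 := by
        refine mul_ne_zero (mul_ne_zero (mul_ne_zero ?_ (pow_ne_zero 2 hπ)) hdi) hdj
        norm_num
      rw [div_mul_eq_mul_div, div_mul_eq_mul_div, neg_div', div_eq_div_iff hA hB]
      ring
    calc chmC i (-i - j) * φ (-j) * (4 * (π:ℂ) ^ 2 * ((chmDenom (i+j) : ℂ)) ^ 2 * φ (i + j))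
        = (chmC i (-i - j) * ((chmDenom (i + j) : ℂ)) ^ 2) *
            (4 * (π:ℂ) ^ 2 * φ (-j) * φ (i + j)) := by ring
      _ = (-(chmC i j * ((chmDenom j : ℂ)) ^ 2)) *
            (4 * (π:ℂ) ^ 2 * φ (-j) * φ (i + j)) := by rw [hscal]
      _ = -(chmC i j * φ (i + j) * (4 * (π:ℂ) ^ 2 * ((chmDenom j : ℂ)) ^ 2 * φ (-j))) := by
            ring
  have hbij : Function.Bijective (fun j : ℤ × ℤ => -i - j) :=
    (Function.Involutive.bijective (fun j => by ring))
  have h1 : (∑ᶠ j, f j) = ∑ᶠ j, f (-i - j) :=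
    (finsum_comp (fun j : ℤ × ℤ => -i - j) hbij).symm
  have h2 : (∑ᶠ j : ℤ × ℤ, f (-i - j)) = ∑ᶠ j, -f j := finsum_congr key
  have h3 : (∑ᶠ j, -f j) = -∑ᶠ j, f j := finsum_neg_distrib f
  have h4 : (∑ᶠ j, f j) = -∑ᶠ j, f j := h1.trans (h2.trans h3)
  have h5 : (∑ᶠ j, f j) + ∑ᶠ j, f j = 0 := by linear_combination h4
  exact add_self_eq_zero.mp h5
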